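/- arXiv:2602.21062 — 14 statements merged into one kernel-verified Lean document; each statement's English description precedes it below -/
import Mathlib

section
/- Under the stated data (thresholds and transfer property), the following are equivalent: (1) min(λMA, λMB) < min(λNA, λNB); (2) max(λMA, λMB) < min(λNA, λNB); (3) λMA = λMB and λMA < min(λNA, λNB). (Proposition 4.2, items (1)–(3).) -/
/-- `λ₀` is a threshold for the family of extinction probability vectors `q`:
below `λ₀` extinction is almost sure (the vector is constantly `1`),
above `λ₀` there is survival with positive probability from every site. -/
def IsThreshold {X : Type*} (q : ℝ → X → ℝ) (lam₀ : ℝ) : Prop :=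
  (∀ lam : ℝ, lam < lam₀ → q lam = fun _ => 1) ∧
  (∀ lam : ℝ, lam₀ < lam → ∀ x, q lam x < 1)

theorem prop42_items1to3
    {X : Type*} [Nonempty X]
    (qMA qMB qNA qNB : ℝ → X → ℝ)
    (lMA lMB lNA lNB : ℝ)
    (hMA : 0 < lMA) (hMB : 0 < lMB) (hNA : 0 < lNA) (hNB : 0 < lNB)
    (htMA : IsThreshold qMA lMA) (htMB : IsThreshold qMB lMB)
    (htNA : IsThreshold qNA lNA) (htNB : IsThreshold qNB lNB)
    (transfer : ∀ lam : ℝ, 0 < lam →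
      (qMA lam = qMB lam ↔ qNA lam = qNB lam) ∧
      (qMA lam < qMB lam ↔ qNA lam < qNB lam) ∧
      (qMB lam < qMA lam ↔ qNB lam < qNA lam)) :
    ((min lMA lMB < min lNA lNB ↔ max lMA lMB < min lNA lNB) ∧
     (min lMA lMB < min lNA lNB ↔ (lMA = lMB ∧ lMA < min lNA lNB))) := by
  obtain ⟨x0⟩ := ‹Nonempty X›
  have key : min lMA lMB < min lNA lNB → lMA = lMB := by
    intro h
    by_contra hne
    rcases lt_or_gt_of_ne hne with hlt | hgt
    · have h1 : lMA < min lNA lNB := by simpa [min_eq_left hlt.le] using h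
      obtain ⟨lam, hl, hu⟩ := exists_between (lt_min hlt h1)
      have hpos : 0 < lam := hMA.trans hl
      have hMBe : qMB lam = fun _ => 1 := htMB.1 lam (hu.trans_le (min_le_left _ _))
      have hNAe : qNA lam = fun _ => 1 :=
        htNA.1 lam (hu.trans_le ((min_le_right _ _).trans (min_le_left _ _)))
      have hNBe : qNB lam = fun _ => 1 :=
        htNB.1 lam (hu.trans_le ((min_le_right _ _).trans (min_le_right _ _)))
      have hMAlt : ∀ x, qMA lam x < 1 := htMA.2 lam hl
      have hlt2 : qMA lam < qMB lam := by
        rw [hMBe]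
        refine lt_of_le_of_ne (fun x => (hMAlt x).le) ?_
        intro hc
        exact absurd (congrFun hc x0) (hMAlt x0).ne
      have := ((transfer lam hpos).2.1).mp hlt2
      rw [hNAe, hNBe] at this
      exact lt_irrefl _ this
    · have h1 : lMB < min lNA lNB := by simpa [min_eq_right hgt.le] using h
      obtain ⟨lam, hl, hu⟩ := exists_between (lt_min hgt h1)
      have hpos : 0 < lam := hMB.trans hl
      have hMAe : qMA lam = fun _ => 1 := htMA.1 lam (hu.trans_le (min_le_left _ _))
      have hNAe : qNA lam = fun _ => 1 :=
        htNA.1 lam (hu.trans_le ((min_le_right _ _).trans (min_le_left _ _)))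
      have hNBe : qNB lam = fun _ => 1 :=
        htNB.1 lam (hu.trans_le ((min_le_right _ _).trans (min_le_right _ _)))
      have hMBlt : ∀ x, qMB lam x < 1 := htMB.2 lam hl
      have hlt2 : qMB lam < qMA lam := by
        rw [hMAe]
        refine lt_of_le_of_ne (fun x => (hMBlt x).le) ?_
        intro hc
        exact absurd (congrFun hc x0) (hMBlt x0).ne
      have := ((transfer lam hpos).2.2).mp hlt2
      rw [hNAe, hNBe] at this
      exact lt_irrefl _ this
  constructor
  · constructor
    · intro h
      have he := key h
      simpa [he] using h
    · intro h
      exact (min_le_max).trans_lt h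
  · constructor
    · intro h
      have he := key h
      exact ⟨he, by simpa [he] using h⟩
    · rintro ⟨he, h⟩
      simpa [he] using h
end

section
/- Under the stated data (thresholds and transfer property), if λMA ≠ λMB, then min(λNA, λNB) ≤ min(λMA, λMB). (Proposition 4.2, item (4).) -/
theorem prop42_item4
    {X : Type*} [Nonempty X]
    (qMA qMB qNA qNB : ℝ → X → ℝ)
    (lMA lMB lNA lNB : ℝ)
    (hMA : 0 < lMA) (hMB : 0 < lMB) (hNA : 0 < lNA) (hNB : 0 < lNB)
    (htMA : IsThreshold qMA lMA) (htMB : IsThreshold qMB lMB)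
    (htNA : IsThreshold qNA lNA) (htNB : IsThreshold qNB lNB)
    (transfer : ∀ lam : ℝ, 0 < lam →
      (qMA lam = qMB lam ↔ qNA lam = qNB lam) ∧
      (qMA lam < qMB lam ↔ qNA lam < qNB lam) ∧
      (qMB lam < qMA lam ↔ qNB lam < qNA lam)) :
    (lMA ≠ lMB → min lNA lNB ≤ min lMA lMB) := by
  intro hne
  by_contra h
  push_neg at h
  -- pick lam between min lMA lMB and min of the other three relevant values
  set a := min lMA lMB with ha
  set b := min (max lMA lMB) (min lNA lNB) with hb
  have hab : a < b := by
    rcases lt_or_gt_of_ne hne with h1 | h1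
    · simp only [ha, hb]
      exact lt_min (by simpa [min_eq_left h1.le, max_eq_right h1.le] using h1)
        h
    · simp only [ha, hb]
      exact lt_min (by simpa [min_eq_right h1.le, max_eq_left h1.le] using h1)
        h
  obtain ⟨lam, hl1, hl2⟩ := exists_between hab
  have h0 : 0 < lam := lt_trans (lt_min hMA hMB) hl1
  have hlNA : lam < lNA := lt_of_lt_of_le hl2 (le_trans (min_le_right _ _) (min_le_left _ _))
  have hlNB : lam < lNB := lt_of_lt_of_le hl2 (le_trans (min_le_right _ _) (min_le_right _ _))
  have hNeq : qNA lam = qNB lam := by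
    rw [htNA.1 lam hlNA, htNB.1 lam hlNB]
  rcases lt_or_gt_of_ne hne with h1 | h1
  · -- lMA < lMB : qMA lam < qMB lam
    have hA : lMA < lam := lt_of_le_of_lt (by simp [ha, min_eq_left h1.le]) hl1
    have hB : lam < lMB := lt_of_lt_of_le hl2 (le_trans (min_le_left _ _) (by simp [max_eq_right h1.le]))
    have hlt : qMA lam < qMB lam := by
      rw [htMB.1 lam hB]
      refine lt_of_le_of_ne (fun x => (htMA.2 lam hA x).le) ?_
      intro heq
      obtain ⟨x⟩ := ‹Nonempty X›
      exact absurd (congrFun heq x) (ne_of_lt (htMA.2 lam hA x))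
    exact absurd hNeq (ne_of_lt ((transfer lam h0).2.1.mp hlt))
  · have hB : lMB < lam := lt_of_le_of_lt (by simp [ha, min_eq_right h1.le]) hl1
    have hA : lam < lMA := lt_of_lt_of_le hl2 (le_trans (min_le_left _ _) (by simp [max_eq_left h1.le]))
    have hlt : qMB lam < qMA lam := by
      rw [htMA.1 lam hA]
      refine lt_of_le_of_ne (fun x => (htMB.2 lam hB x).le) ?_
      intro heq
      obtain ⟨x⟩ := ‹Nonempty X›
      exact absurd (congrFun heq x) (ne_of_lt (htMB.2 lam hB x))
    exact absurd hNeq.symm (ne_of_lt ((transfer lam h0).2.2.mp hlt))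
end

section
/- Under the stated data (thresholds and transfer property), if λMA ≠ λMB and λNA ≠ λNB, then min(λNA, λNB) = min(λMA, λMB); moreover, λMA = min(λMA, λMB) ↔ λNA = min(λNA, λNB), and λMB = min(λMA, λMB) ↔ λNB = min(λNA, λNB). (Proposition 4.2, item (5).) -/
private lemma pi_lt_of_forall_lt {X : Type*} [Nonempty X] {f g : X → ℝ}
    (h : ∀ x, f x < g x) : f < g := by
  obtain ⟨x⟩ := ‹Nonempty X›
  exact lt_of_le_of_ne (fun y => (h y).le) (fun he => absurd (congrFun he x) (h x).ne)

private lemma key_lemma {X : Type*} [Nonempty X]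
    (qA qB qA' qB' : ℝ → X → ℝ) (lA lB lA' lB' : ℝ)
    (hA : 0 < lA) (hA' : 0 < lA') (hB' : 0 < lB')
    (tA : IsThreshold qA lA) (tB : IsThreshold qB lB)
    (tA' : IsThreshold qA' lA') (tB' : IsThreshold qB' lB')
    (tr : ∀ lam : ℝ, 0 < lam →
      (qA lam < qB lam ↔ qA' lam < qB' lam) ∧
      (qB lam < qA lam ↔ qB' lam < qA' lam))
    (h : lA < lB) (hne : lA' ≠ lB') :
    lA' < lB' ∧ lA' = lA := by
  -- Step (a): min lA' lB' ≤ lA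
  have ha : min lA' lB' ≤ lA := by
    by_contra hlt
    push_neg at hlt
    obtain ⟨lam, h1, h2⟩ := exists_between (lt_min h hlt)
    have hpos : 0 < lam := hA.trans h1
    have hlB : lam < lB := h2.trans_le (min_le_left _ _)
    have hlA' : lam < lA' := h2.trans_le ((min_le_right _ _).trans (min_le_left _ _))
    have hlB' : lam < lB' := h2.trans_le ((min_le_right _ _).trans (min_le_right _ _))
    have hAB : qA lam < qB lam := by
      apply pi_lt_of_forall_lt
      intro x
      have := tA.2 lam h1 x
      rw [tB.1 lam hlB]
      exact this
    have hAB' := (tr lam hpos).1.mp hAB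
    rw [tA'.1 lam hlA', tB'.1 lam hlB'] at hAB'
    exact lt_irrefl _ hAB'
  -- Step (b): lA ≤ min lA' lB'
  have hb : lA ≤ min lA' lB' := by
    by_contra hlt
    push_neg at hlt
    rcases lt_or_gt_of_ne hne with hc | hc
    · -- lA' < lB', min = lA'
      rw [min_eq_left hc.le] at hlt
      obtain ⟨lam, h1, h2⟩ := exists_between (lt_min hlt hc)
      have hpos : 0 < lam := hA'.trans h1
      have hlA : lam < lA := h2.trans_le (min_le_left _ _)
      have hlB' : lam < lB' := h2.trans_le (min_le_right _ _)
      have hAB' : qA' lam < qB' lam := by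
        apply pi_lt_of_forall_lt
        intro x
        have := tA'.2 lam h1 x
        rw [tB'.1 lam hlB']
        exact this
      have hAB := (tr lam hpos).1.mpr hAB'
      rw [tA.1 lam hlA, tB.1 lam (hlA.trans h)] at hAB
      exact lt_irrefl _ hAB
    · -- lB' < lA', min = lB'
      rw [min_eq_right hc.le] at hlt
      obtain ⟨lam, h1, h2⟩ := exists_between (lt_min hlt hc)
      have hpos : 0 < lam := hB'.trans h1
      have hlA : lam < lA := h2.trans_le (min_le_left _ _)
      have hlA' : lam < lA' := h2.trans_le (min_le_right _ _)
      have hBA' : qB' lam < qA' lam := by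
        apply pi_lt_of_forall_lt
        intro x
        have := tB'.2 lam h1 x
        rw [tA'.1 lam hlA']
        exact this
      have hBA := (tr lam hpos).2.mpr hBA'
      rw [tA.1 lam hlA, tB.1 lam (hlA.trans h)] at hBA
      exact lt_irrefl _ hBA
  have hmin : min lA' lB' = lA := le_antisymm ha hb
  -- Step (c): lA' < lB'
  rcases lt_or_gt_of_ne hne with hc | hc
  · refine ⟨hc, ?_⟩
    rw [min_eq_left hc.le] at hmin
    exact hmin
  · exfalso
    rw [min_eq_right hc.le] at hmin
    -- lB' = lA; pick lam ∈ (lA, min lA' lB)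
    obtain ⟨lam, h1, h2⟩ := exists_between (lt_min (hmin ▸ hc) h)
    have hpos : 0 < lam := hA.trans h1
    have hlA' : lam < lA' := h2.trans_le (min_le_left _ _)
    have hlB : lam < lB := h2.trans_le (min_le_right _ _)
    have hAB : qA lam < qB lam := by
      apply pi_lt_of_forall_lt
      intro x
      have := tA.2 lam h1 x
      rw [tB.1 lam hlB]
      exact this
    have hBA' : qB' lam < qA' lam := by
      apply pi_lt_of_forall_lt
      intro x
      have := tB'.2 lam (hmin ▸ h1) x
      rw [tA'.1 lam hlA']
      exact this
    have hBA := (tr lam hpos).2.mpr hBA'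
    exact lt_asymm hAB hBA

theorem prop42_item5
    {X : Type*} [Nonempty X]
    (qMA qMB qNA qNB : ℝ → X → ℝ)
    (lMA lMB lNA lNB : ℝ)
    (hMA : 0 < lMA) (hMB : 0 < lMB) (hNA : 0 < lNA) (hNB : 0 < lNB)
    (htMA : IsThreshold qMA lMA) (htMB : IsThreshold qMB lMB)
    (htNA : IsThreshold qNA lNA) (htNB : IsThreshold qNB lNB)
    (transfer : ∀ lam : ℝ, 0 < lam →
      (qMA lam = qMB lam ↔ qNA lam = qNB lam) ∧
      (qMA lam < qMB lam ↔ qNA lam < qNB lam) ∧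
      (qMB lam < qMA lam ↔ qNB lam < qNA lam)) :
    (lMA ≠ lMB → lNA ≠ lNB →
      min lNA lNB = min lMA lMB ∧
      (lMA = min lMA lMB ↔ lNA = min lNA lNB) ∧
      (lMB = min lMA lMB ↔ lNB = min lNA lNB)) := by
  intro hMne hNne
  rcases lt_or_gt_of_ne hMne with hM | hM
  · obtain ⟨hN, heq⟩ := key_lemma qMA qMB qNA qNB lMA lMB lNA lNB hMA hNA hNB
      htMA htMB htNA htNB
      (fun lam hl => ⟨(transfer lam hl).2.1, (transfer lam hl).2.2⟩) hM hNne
    rw [min_eq_left hM.le, min_eq_left hN.le]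
    exact ⟨heq, ⟨fun _ => rfl, fun _ => rfl⟩,
      ⟨fun h => absurd h.symm hM.ne, fun h => absurd h.symm hN.ne⟩⟩
  · obtain ⟨hN, heq⟩ := key_lemma qMB qMA qNB qNA lMB lMA lNB lNA hMB hNB hNA
      htMB htMA htNB htNA
      (fun lam hl => ⟨(transfer lam hl).2.2, (transfer lam hl).2.1⟩) hM (Ne.symm hNne)
    rw [min_eq_right hM.le, min_eq_right hN.le]
    exact ⟨heq, ⟨fun h => absurd h hM.ne', fun h => absurd h hN.ne'⟩,
      ⟨fun _ => rfl, fun _ => rfl⟩⟩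
end

section
/- Under the stated data (thresholds and transfer property), if λMA ≠ λMB, then either (λNA = λNB and λNA ≤ min(λMA, λMB)) or (min(λNA, λNB) = min(λMA, λMB) and min(λMA, λMB) < max(λNA, λNB)). (Proposition 4.2, item (6).) -/
lemma lt_of_thresholds {X : Type*} [Nonempty X] {f g : ℝ → X → ℝ} {lf lg lam : ℝ}
    (htf : IsThreshold f lf) (htg : IsThreshold g lg)
    (h1 : lf < lam) (h2 : lam < lg) : f lam < g lam := by
  have hg : g lam = fun _ => 1 := htg.1 lam h2
  have hf : ∀ x, f lam x < 1 := htf.2 lam h1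
  rw [Pi.lt_def]
  refine ⟨fun x => ?_, ?_⟩
  · rw [hg]; exact (hf x).le
  · obtain ⟨x⟩ := ‹Nonempty X›
    exact ⟨x, by rw [hg]; exact hf x⟩

lemma prop42_aux
    {X : Type*} [Nonempty X]
    (qMA qMB qNA qNB : ℝ → X → ℝ)
    (lMA lMB lNA lNB : ℝ)
    (hMA : 0 < lMA) (hNA : 0 < lNA) (hNB : 0 < lNB)
    (htMA : IsThreshold qMA lMA) (htMB : IsThreshold qMB lMB)
    (htNA : IsThreshold qNA lNA) (htNB : IsThreshold qNB lNB)
    (transfer : ∀ lam : ℝ, 0 < lam →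
      (qMA lam = qMB lam ↔ qNA lam = qNB lam) ∧
      (qMA lam < qMB lam ↔ qNA lam < qNB lam) ∧
      (qMB lam < qMA lam ↔ qNB lam < qNA lam))
    (hlt : lMA < lMB) :
      (lNA = lNB ∧ lNA ≤ min lMA lMB) ∨
      (min lNA lNB = min lMA lMB ∧ min lMA lMB < max lNA lNB) := by
  -- for lam in (lMA, lMB): qNA lam < qNB lam
  have strict : ∀ lam : ℝ, lMA < lam → lam < lMB → qNA lam < qNB lam := by
    intro lam h1 h2
    exact ((transfer lam (hMA.trans h1)).2.1).mp (lt_of_thresholds htMA htMB h1 h2)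
  -- min lNA lNB ≤ lMA
  have hminN : min lNA lNB ≤ lMA := by
    by_contra h
    push_neg at h
    obtain ⟨lam, h1, h2⟩ := exists_between (lt_min h (by exact_mod_cast hlt) :
      lMA < min (min lNA lNB) lMB)
    have hN := strict lam h1 (h2.trans_le (min_le_right _ _))
    have hA : qNA lam = fun _ => 1 :=
      htNA.1 lam (h2.trans_le ((min_le_left _ _).trans (min_le_left _ _)))
    have hB : qNB lam = fun _ => 1 :=
      htNB.1 lam (h2.trans_le ((min_le_left _ _).trans (min_le_right _ _)))
    exact hN.ne (hA.trans hB.symm)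
  rcases eq_or_ne lNA lNB with heq | hne
  · left
    refine ⟨heq, le_min ?_ ?_⟩
    · simpa [heq] using hminN
    · have : lNA ≤ lMA := by simpa [heq] using hminN
      exact this.trans hlt.le
  · right
    rcases hne.lt_or_gt with hlt' | hlt'
    · -- lNA < lNB; show lMA ≤ lNA
      have hle : lMA ≤ lNA := by
        by_contra h
        push_neg at h
        obtain ⟨lam, h1, h2⟩ := exists_between (lt_min h hlt' : lNA < min lMA lNB)
        have hN : qNA lam < qNB lam :=
          lt_of_thresholds htNA htNB h1 (h2.trans_le (min_le_right _ _))
        have hM : qMA lam < qMB lam := ((transfer lam (hNA.trans h1)).2.1).mpr hN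
        have h2' : lam < lMA := h2.trans_le (min_le_left _ _)
        exact hM.ne ((htMA.1 lam h2').trans (htMB.1 lam (h2'.trans hlt)).symm)
      have hNAeq : lNA = lMA := le_antisymm (by simpa [min_eq_left hlt'.le] using hminN) hle
      constructor
      · rw [min_eq_left hlt'.le, min_eq_left hlt.le, hNAeq]
      · rw [min_eq_left hlt.le, max_eq_right hlt'.le, ← hNAeq]; exact hlt'
    · -- lNB < lNA; show lMA ≤ lNB
      have hle : lMA ≤ lNB := by
        by_contra h
        push_neg at h
        obtain ⟨lam, h1, h2⟩ := exists_between (lt_min h hlt' : lNB < min lMA lNA)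
        have hN : qNB lam < qNA lam :=
          lt_of_thresholds htNB htNA h1 (h2.trans_le (min_le_right _ _))
        have hM : qMB lam < qMA lam := ((transfer lam (hNB.trans h1)).2.2).mpr hN
        have h2' : lam < lMA := h2.trans_le (min_le_left _ _)
        exact hM.ne ((htMB.1 lam (h2'.trans hlt)).trans (htMA.1 lam h2').symm)
      have hNBeq : lNB = lMA := le_antisymm (by simpa [min_eq_right hlt'.le] using hminN) hle
      constructor
      · rw [min_eq_right hlt'.le, min_eq_left hlt.le, hNBeq]
      · rw [min_eq_left hlt.le, max_eq_left hlt'.le, ← hNBeq]; exact hlt'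

theorem prop42_item6
    {X : Type*} [Nonempty X]
    (qMA qMB qNA qNB : ℝ → X → ℝ)
    (lMA lMB lNA lNB : ℝ)
    (hMA : 0 < lMA) (hMB : 0 < lMB) (hNA : 0 < lNA) (hNB : 0 < lNB)
    (htMA : IsThreshold qMA lMA) (htMB : IsThreshold qMB lMB)
    (htNA : IsThreshold qNA lNA) (htNB : IsThreshold qNB lNB)
    (transfer : ∀ lam : ℝ, 0 < lam →
      (qMA lam = qMB lam ↔ qNA lam = qNB lam) ∧
      (qMA lam < qMB lam ↔ qNA lam < qNB lam) ∧
      (qMB lam < qMA lam ↔ qNB lam < qNA lam)) :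
    (lMA ≠ lMB →
      (lNA = lNB ∧ lNA ≤ min lMA lMB) ∨
      (min lNA lNB = min lMA lMB ∧ min lMA lMB < max lNA lNB)) := by
  intro hne
  rcases hne.lt_or_gt with h | h
  · exact prop42_aux qMA qMB qNA qNB lMA lMB lNA lNB hMA hNA hNB
      htMA htMB htNA htNB transfer h
  · have transfer' : ∀ lam : ℝ, 0 < lam →
        (qMB lam = qMA lam ↔ qNB lam = qNA lam) ∧
        (qMB lam < qMA lam ↔ qNB lam < qNA lam) ∧
        (qMA lam < qMB lam ↔ qNA lam < qNB lam) := by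
      intro lam hpos
      obtain ⟨t1, t2, t3⟩ := transfer lam hpos
      exact ⟨⟨fun h => (t1.mp h.symm).symm, fun h => (t1.mpr h.symm).symm⟩, t3, t2⟩
    have := prop42_aux qMB qMA qNB qNA lMB lMA lNB lNA hMB hNB hNA
      htMB htMA htNB htNA transfer' h
    rcases this with ⟨h1, h2⟩ | ⟨h1, h2⟩
    · exact Or.inl ⟨h1.symm, by rw [min_comm lMA]; exact h1 ▸ h2⟩
    · exact Or.inr ⟨by rwa [min_comm lNA, min_comm lMA], by rwa [min_comm lMA, max_comm lNA]⟩
end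

section
/- Under the stated data (thresholds and transfer property), if max(λMA, λMB) ≤ min(λNA, λNB), then λMA = λMB, and hence λMA = λMB ≤ min(λNA, λNB). (Corollary 4.3, item (1).) -/
/-- Helper: a strict gap between the two M-thresholds below both N-thresholds is impossible. -/
lemma cor43_aux {X : Type*} [Nonempty X]
    (qA qB qNA qNB : ℝ → X → ℝ) (lA lB lNA lNB : ℝ)
    (hA : 0 < lA)
    (htA : IsThreshold qA lA) (htB : IsThreshold qB lB)
    (htNA : IsThreshold qNA lNA) (htNB : IsThreshold qNB lNB)
    (tr : ∀ lam : ℝ, 0 < lam → (qA lam < qB lam → qNA lam < qNB lam))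
    (hlt : lA < lB) (hmin : lB ≤ min lNA lNB) : False := by
  set lam := (lA + lB) / 2 with hlam
  have h1 : lA < lam := by simp [hlam]; linarith
  have h2 : lam < lB := by simp [hlam]; linarith
  have hpos : 0 < lam := lt_trans hA h1
  have hB1 : qB lam = fun _ => 1 := htB.1 lam h2
  have hAlt : ∀ x, qA lam x < 1 := htA.2 lam h1
  have hstrict : qA lam < qB lam := by
    rw [lt_iff_le_and_ne]
    constructor
    · intro x; rw [hB1]; exact (hAlt x).le
    · intro h
      obtain ⟨x⟩ := ‹Nonempty X›
      have := hAlt x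
      rw [h, hB1] at this
      exact lt_irrefl _ this
  have hN : qNA lam < qNB lam := tr lam hpos hstrict
  have hNA1 : qNA lam = fun _ => 1 := htNA.1 lam (lt_of_lt_of_le h2 (hmin.trans (min_le_left _ _)))
  have hNB1 : qNB lam = fun _ => 1 := htNB.1 lam (lt_of_lt_of_le h2 (hmin.trans (min_le_right _ _)))
  rw [hNA1, hNB1] at hN
  exact lt_irrefl _ hN

theorem cor43_item1
    {X : Type*} [Nonempty X]
    (qMA qMB qNA qNB : ℝ → X → ℝ)
    (lMA lMB lNA lNB : ℝ)
    (hMA : 0 < lMA) (hMB : 0 < lMB) (hNA : 0 < lNA) (hNB : 0 < lNB)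
    (htMA : IsThreshold qMA lMA) (htMB : IsThreshold qMB lMB)
    (htNA : IsThreshold qNA lNA) (htNB : IsThreshold qNB lNB)
    (transfer : ∀ lam : ℝ, 0 < lam →
      (qMA lam = qMB lam ↔ qNA lam = qNB lam) ∧
      (qMA lam < qMB lam ↔ qNA lam < qNB lam) ∧
      (qMB lam < qMA lam ↔ qNB lam < qNA lam)) :
    (max lMA lMB ≤ min lNA lNB → lMA = lMB ∧ lMA ≤ min lNA lNB) := by
  intro hmax
  have heq : lMA = lMB := by
    rcases lt_trichotomy lMA lMB with h | h | h
    · exact (cor43_aux qMA qMB qNA qNB lMA lMB lNA lNB hMA htMA htMB htNA htNB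
        (fun lam hl => ((transfer lam hl).2.1).mp) h
        ((le_max_right _ _).trans hmax)).elim
    · exact h
    · exact (cor43_aux qMB qMA qNB qNA lMB lMA lNB lNA hMB htMB htMA htNB htNA
        (fun lam hl => ((transfer lam hl).2.2).mp) h
        (by simpa [min_comm] using (le_max_left lMA lMB).trans hmax : lMA ≤ min lNB lNA)).elim
  refine ⟨heq, ?_⟩
  exact (le_max_left _ _).trans hmax
end

section
/- Under the stated data (thresholds and transfer property), if λNA ≠ λNB and max(λMA, λMB) > min(λNA, λNB), then λMA ≠ λMB and max(λMA, λMB) > min(λMA, λMB) = min(λNA, λNB). (Corollary 4.3, item (2).) -/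
lemma thresh_lt {X : Type*} [Nonempty X] {qa qb : ℝ → X → ℝ} {la lb lam : ℝ}
    (hta : IsThreshold qa la) (htb : IsThreshold qb lb)
    (h1 : la < lam) (h2 : lam < lb) : qa lam < qb lam := by
  have hb := htb.1 lam h2
  have ha := hta.2 lam h1
  rw [hb]
  refine lt_of_le_of_ne (Pi.le_def.mpr fun x => (ha x).le) ?_
  intro h
  obtain ⟨x⟩ := ‹Nonempty X›
  exact absurd (congrFun h x) (ha x).ne

lemma cor43_aux_s7
    {X : Type*} [Nonempty X]
    (qMA qMB qNA qNB : ℝ → X → ℝ)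
    (lMA lMB lNA lNB : ℝ)
    (hMA : 0 < lMA) (hMB : 0 < lMB) (hNA : 0 < lNA)
    (htMA : IsThreshold qMA lMA) (htMB : IsThreshold qMB lMB)
    (htNA : IsThreshold qNA lNA) (htNB : IsThreshold qNB lNB)
    (transfer_eq : ∀ lam : ℝ, 0 < lam → (qMA lam = qMB lam ↔ qNA lam = qNB lam))
    (transfer_lt : ∀ lam : ℝ, 0 < lam → (qMA lam < qMB lam ↔ qNA lam < qNB lam))
    (hNAB : lNA < lNB) (hmax : lNA < max lMA lMB) :
    lMA ≠ lMB ∧ min lMA lMB = lNA ∧ min lMA lMB < max lMA lMB := by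
  -- generic contradiction: a point strictly between lNA and lNB,
  -- below both lMA and lMB, is impossible
  have key : ∀ lam : ℝ, lNA < lam → lam < lNB → lam < lMA → lam < lMB → False := by
    intro lam h1 h2 h3 h4
    have hpos : 0 < lam := hNA.trans h1
    have hN : qNA lam < qNB lam := thresh_lt htNA htNB h1 h2
    have hM : qMA lam < qMB lam := (transfer_lt lam hpos).mpr hN
    have : qMA lam = qMB lam := (htMA.1 lam h3).trans (htMB.1 lam h4).symm
    exact hM.ne this
  have hne : lMA ≠ lMB := by
    intro he
    have hm : lNA < lMB := by rwa [he, max_self] at hmax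
    have hlu : lNA < min lMB lNB := lt_min hm hNAB
    obtain ⟨lam, h1, h2⟩ := exists_between hlu
    exact key lam h1 (h2.trans_le (min_le_right _ _))
      (he ▸ h2.trans_le (min_le_left _ _)) (h2.trans_le (min_le_left _ _))
  have hminmax : min lMA lMB < max lMA lMB := min_lt_max.mpr hne
  refine ⟨hne, le_antisymm ?_ ?_, hminmax⟩
  · -- min lMA lMB ≤ lNA
    by_contra h
    push_neg at h
    have hlu : lNA < min lNB (min lMA lMB) := lt_min hNAB h
    obtain ⟨lam, h1, h2⟩ := exists_between hlu
    have hlNB : lam < lNB := h2.trans_le (min_le_left _ _)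
    have hmm : lam < min lMA lMB := h2.trans_le (min_le_right _ _)
    exact key lam h1 hlNB (hmm.trans_le (min_le_left _ _)) (hmm.trans_le (min_le_right _ _))
  · -- lNA ≤ min lMA lMB
    by_contra h
    push_neg at h
    have hlu : min lMA lMB < min lNA (max lMA lMB) := lt_min h hminmax
    obtain ⟨lam, h1, h2⟩ := exists_between hlu
    have hlNA : lam < lNA := h2.trans_le (min_le_left _ _)
    have hmx : lam < max lMA lMB := h2.trans_le (min_le_right _ _)
    have hpos : 0 < lam := lt_of_lt_of_le (lt_min hMA hMB) h1.le
    -- qNA lam = qNB lam since lam < lNA < lNB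
    have hNeq : qNA lam = qNB lam :=
      (htNA.1 lam hlNA).trans (htNB.1 lam (hlNA.trans hNAB)).symm
    have hMeq : qMA lam = qMB lam := (transfer_eq lam hpos).mpr hNeq
    -- but lam is strictly between lMA and lMB
    rcases hne.lt_or_gt with hab | hba
    · have : qMA lam < qMB lam :=
        thresh_lt htMA htMB (by rwa [min_eq_left hab.le] at h1) (by rwa [max_eq_right hab.le] at hmx)
      exact this.ne hMeq
    · have : qMB lam < qMA lam :=
        thresh_lt htMB htMA (by rwa [min_eq_right hba.le] at h1) (by rwa [max_eq_left hba.le] at hmx)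
      exact this.ne hMeq.symm

theorem cor43_item2
    {X : Type*} [Nonempty X]
    (qMA qMB qNA qNB : ℝ → X → ℝ)
    (lMA lMB lNA lNB : ℝ)
    (hMA : 0 < lMA) (hMB : 0 < lMB) (hNA : 0 < lNA) (hNB : 0 < lNB)
    (htMA : IsThreshold qMA lMA) (htMB : IsThreshold qMB lMB)
    (htNA : IsThreshold qNA lNA) (htNB : IsThreshold qNB lNB)
    (transfer : ∀ lam : ℝ, 0 < lam →
      (qMA lam = qMB lam ↔ qNA lam = qNB lam) ∧
      (qMA lam < qMB lam ↔ qNA lam < qNB lam) ∧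
      (qMB lam < qMA lam ↔ qNB lam < qNA lam)) :
    (lNA ≠ lNB → min lNA lNB < max lMA lMB →
      lMA ≠ lMB ∧ min lMA lMB = min lNA lNB ∧ min lMA lMB < max lMA lMB) := by
  intro hne hmax
  rcases hne.lt_or_gt with h | h
  · rw [min_eq_left h.le] at hmax ⊢
    exact cor43_aux_s7 qMA qMB qNA qNB lMA lMB lNA lNB hMA hMB hNA htMA htMB htNA htNB
      (fun lam hl => (transfer lam hl).1) (fun lam hl => (transfer lam hl).2.1) h hmax
  · rw [min_eq_right h.le] at hmax ⊢
    have := cor43_aux_s7 qMB qMA qNB qNA lMB lMA lNB lNA hMB hMA hNB htMB htMA htNB htNA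
      (fun lam hl => ⟨fun e => ((transfer lam hl).1.mp e.symm).symm,
        fun e => ((transfer lam hl).1.mpr e.symm).symm⟩)
      (fun lam hl => (transfer lam hl).2.2) h (by rwa [max_comm])
    exact ⟨this.1.symm, by rw [min_comm]; exact this.2.1, by rw [min_comm, max_comm]; exact this.2.2⟩
end

section
/- Under the stated data (thresholds and transfer property), either min(λNA, λNB) ≤ min(λMA, λMB) or λMA = λMB. (Corollary 4.4, item (1).) -/
private lemma aux_case
    {X : Type*} [Nonempty X]
    (qA qB qC qD : ℝ → X → ℝ)
    (lA lB lC lD : ℝ)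
    (hA : 0 < lA)
    (htA : IsThreshold qA lA) (htB : IsThreshold qB lB)
    (htC : IsThreshold qC lC) (htD : IsThreshold qD lD)
    (hAB : lA < lB) (hAC : lA < lC) (hAD : lA < lD)
    (tr : ∀ lam : ℝ, 0 < lam → (qA lam < qB lam ↔ qC lam < qD lam)) :
    False := by
  set b : ℝ := min lB (min lC lD) with hb
  have hab : lA < b := lt_min hAB (lt_min hAC hAD)
  set lam : ℝ := (lA + b) / 2 with hlam
  have h1 : lA < lam := by simp [hlam]; linarith
  have h2 : lam < b := by simp [hlam]; linarith
  have hpos : 0 < lam := lt_trans hA h1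
  have hB : qB lam = fun _ => 1 := htB.1 lam (lt_of_lt_of_le h2 (min_le_left _ _))
  have hC : qC lam = fun _ => 1 :=
    htC.1 lam (lt_of_lt_of_le h2 (le_trans (min_le_right _ _) (min_le_left _ _)))
  have hD : qD lam = fun _ => 1 :=
    htD.1 lam (lt_of_lt_of_le h2 (le_trans (min_le_right _ _) (min_le_right _ _)))
  have hAlt : ∀ x, qA lam x < 1 := htA.2 lam h1
  have hlt : qA lam < qB lam := by
    rw [Pi.lt_def]
    refine ⟨fun x => ?_, ⟨Classical.arbitrary X, ?_⟩⟩
    · rw [hB]; exact le_of_lt (hAlt _)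
    · rw [hB]; exact hAlt _
  have := (tr lam hpos).mp hlt
  rw [hC, hD] at this
  exact lt_irrefl _ this

theorem cor44_item1
    {X : Type*} [Nonempty X]
    (qMA qMB qNA qNB : ℝ → X → ℝ)
    (lMA lMB lNA lNB : ℝ)
    (hMA : 0 < lMA) (hMB : 0 < lMB) (hNA : 0 < lNA) (hNB : 0 < lNB)
    (htMA : IsThreshold qMA lMA) (htMB : IsThreshold qMB lMB)
    (htNA : IsThreshold qNA lNA) (htNB : IsThreshold qNB lNB)
    (transfer : ∀ lam : ℝ, 0 < lam →
      (qMA lam = qMB lam ↔ qNA lam = qNB lam) ∧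
      (qMA lam < qMB lam ↔ qNA lam < qNB lam) ∧
      (qMB lam < qMA lam ↔ qNB lam < qNA lam)) :
    (min lNA lNB ≤ min lMA lMB ∨ lMA = lMB) := by
  by_contra h
  push_neg at h
  obtain ⟨hlt, hne⟩ := h
  rcases lt_or_gt_of_ne hne with hc | hc
  · have hmin : min lMA lMB = lMA := min_eq_left (le_of_lt hc)
    rw [hmin] at hlt
    exact aux_case qMA qMB qNA qNB lMA lMB lNA lNB hMA htMA htMB htNA htNB hc
      (lt_of_lt_of_le hlt (min_le_left _ _)) (lt_of_lt_of_le hlt (min_le_right _ _))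
      (fun lam hl => (transfer lam hl).2.1)
  · have hmin : min lMA lMB = lMB := min_eq_right (le_of_lt hc)
    rw [hmin] at hlt
    exact aux_case qMB qMA qNB qNA lMB lMA lNB lNA hMB htMB htMA htNB htNA hc
      (lt_of_lt_of_le hlt (min_le_right _ _)) (lt_of_lt_of_le hlt (min_le_left _ _))
      (fun lam hl => (transfer lam hl).2.2)
end

section
/- Under the stated data (thresholds and transfer property), if λMB > λMA, then λMA ≥ λNA. (Corollary 4.4, item (2): either the critical parameter of A for the original process dominates that of the modified process, or the two critical parameters of the original process coincide.) -/
theorem cor44_item2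
    {X : Type*} [Nonempty X]
    (qMA qMB qNA qNB : ℝ → X → ℝ)
    (lMA lMB lNA lNB : ℝ)
    (hMA : 0 < lMA) (hMB : 0 < lMB) (hNA : 0 < lNA) (hNB : 0 < lNB)
    (htMA : IsThreshold qMA lMA) (htMB : IsThreshold qMB lMB)
    (htNA : IsThreshold qNA lNA) (htNB : IsThreshold qNB lNB)
    (transfer : ∀ lam : ℝ, 0 < lam →
      (qMA lam = qMB lam ↔ qNA lam = qNB lam) ∧
      (qMA lam < qMB lam ↔ qNA lam < qNB lam) ∧
      (qMB lam < qMA lam ↔ qNB lam < qNA lam)) :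
    (lMA < lMB → lNA ≤ lMA) := by
  intro hAB
  by_contra h
  push_neg at h
  -- key: any lam strictly between lMA and min lMB lNA with lam ≠ lNB gives a contradiction
  have key : ∀ lam : ℝ, lMA < lam → lam < lMB → lam < lNA → lam ≠ lNB → False := by
    intro lam h1 h2 h3 h4
    have hpos : 0 < lam := hMA.trans h1
    have hMBeq : qMB lam = fun _ => 1 := htMB.1 lam h2
    have hMAlt : ∀ x, qMA lam x < 1 := htMA.2 lam h1
    have hlt : qMA lam < qMB lam := by
      obtain ⟨x₀⟩ := ‹Nonempty X›
      refine lt_of_le_of_ne (fun x => ?_) (fun he => ?_)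
      · rw [hMBeq]; exact (hMAlt x).le
      · have := hMAlt x₀
        rw [he, hMBeq] at this
        exact lt_irrefl 1 this
    have hNlt : qNA lam < qNB lam := ((transfer lam hpos).2.1).mp hlt
    have hNAeq : qNA lam = fun _ => 1 := htNA.1 lam h3
    rcases lt_or_gt_of_ne h4 with hc | hc
    · have : qNB lam = fun _ => 1 := htNB.1 lam hc
      rw [hNAeq, this] at hNlt
      exact lt_irrefl _ hNlt
    · have hlt2 : qNB lam < qNA lam := by
        obtain ⟨x₀⟩ := ‹Nonempty X›
        have hNBlt := htNB.2 lam hc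
        refine lt_of_le_of_ne (fun x => ?_) (fun he => ?_)
        · rw [hNAeq]; exact (hNBlt x).le
        · have := hNBlt x₀
          rw [he, hNAeq] at this
          exact lt_irrefl 1 this
      exact lt_asymm hNlt hlt2
  set m := min lMB lNA with hm
  have hmgt : lMA < m := lt_min hAB h
  set l1 := (lMA + m) / 2 with hl1
  set l2 := (lMA + l1) / 2 with hl2
  have hl1a : lMA < l1 := by simp [hl1]; linarith
  have hl1b : l1 < m := by simp [hl1]; linarith
  have hl2a : lMA < l2 := by simp [hl2]; linarith
  have hl2b : l2 < l1 := by simp [hl2]; linarith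
  by_cases hne : l1 = lNB
  · exact key l2 hl2a (lt_of_lt_of_le (hl2b.trans hl1b) (min_le_left _ _))
      (lt_of_lt_of_le (hl2b.trans hl1b) (min_le_right _ _)) (by rw [← hne]; exact hl2b.ne)
  · exact key l1 hl1a (lt_of_lt_of_le hl1b (min_le_left _ _))
      (lt_of_lt_of_le hl1b (min_le_right _ _)) hne
end

section
/- Under the stated data (thresholds and transfer property), if max(λMA, λNB) < λMB, then for every λ with max(λMA, λNB) < λ < λMB one has: qNB λ x < 1 for every x ∈ X, and qNA λ < qNB λ in the pointwise order on X → ℝ. (By the paper's Theorem 2.3, these inequalities mean that the modified process at parameter λ survives in B with positive probability and, with positive probability, survives in A while becoming extinct in B; this is the abstract content of Proposition 4.6.) -/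
theorem prop46
    {X : Type*} [Nonempty X]
    (qMA qMB qNA qNB : ℝ → X → ℝ)
    (lMA lMB lNA lNB : ℝ)
    (hMA : 0 < lMA) (hMB : 0 < lMB) (hNA : 0 < lNA) (hNB : 0 < lNB)
    (htMA : IsThreshold qMA lMA) (htMB : IsThreshold qMB lMB)
    (htNA : IsThreshold qNA lNA) (htNB : IsThreshold qNB lNB)
    (transfer : ∀ lam : ℝ, 0 < lam →
      (qMA lam = qMB lam ↔ qNA lam = qNB lam) ∧
      (qMA lam < qMB lam ↔ qNA lam < qNB lam) ∧
      (qMB lam < qMA lam ↔ qNB lam < qNA lam)) :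
    (max lMA lNB < lMB →
      ∀ lam : ℝ, max lMA lNB < lam → lam < lMB →
        (∀ x, qNB lam x < 1) ∧ qNA lam < qNB lam) := by
  intro _ lam hlo hhi
  have hMAlam : lMA < lam := lt_of_le_of_lt (le_max_left _ _) hlo
  have hNBlam : lNB < lam := lt_of_le_of_lt (le_max_right _ _) hlo
  have hpos : 0 < lam := hMA.trans hMAlam
  refine ⟨htNB.2 lam hNBlam, ?_⟩
  have hMB1 : qMB lam = fun _ => 1 := htMB.1 lam hhi
  have hMlt : qMA lam < qMB lam := by
    constructor
    · intro x
      rw [hMB1]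
      exact (htMA.2 lam hMAlam x).le
    · intro h
      obtain ⟨x⟩ := ‹Nonempty X›
      have h1 := h x
      have h2 : qMB lam x = 1 := by rw [hMB1]
      linarith [htMA.2 lam hMAlam x]
  exact ((transfer lam hpos).2.1).mp hMlt
end

section
/- Under the stated data, if λMA < λMs, then either (λNs = λNA and λNA ≤ λMA) or (λNA = λMA and λMA < λNs). (Corollary 5.5: trichotomy for the critical parameter of a set A versus the local critical parameter under finite modifications.) -/
theorem cor55
    {X : Type*} [Nonempty X]
    (qMA qMC qNA qNC : ℝ → X → ℝ)
    (lMA lMs lNA lNs : ℝ)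
    (hMA : 0 < lMA) (hMs : 0 < lMs) (hNA : 0 < lNA) (hNs : 0 < lNs)
    (htMA : IsThreshold qMA lMA) (htMs : IsThreshold qMC lMs)
    (htNA : IsThreshold qNA lNA) (htNs : IsThreshold qNC lNs)
    (hles : lMA ≤ lMs) (hlesN : lNA ≤ lNs)
    (transfer : ∀ lam : ℝ, 0 < lam →
      (qMA lam = qMC lam ↔ qNA lam = qNC lam) ∧
      (qMA lam < qMC lam ↔ qNA lam < qNC lam) ∧
      (qMC lam < qMA lam ↔ qNC lam < qNA lam)) :
    lMA < lMs →
      (lNs = lNA ∧ lNA ≤ lMA) ∨ (lNA = lMA ∧ lMA < lNs) := by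
  intro hMAs
  have strict : ∀ (q1 q2 : ℝ → X → ℝ) (l1 l2 : ℝ), IsThreshold q1 l1 → IsThreshold q2 l2 →
      ∀ lam, l1 < lam → lam < l2 → q1 lam < q2 lam := by
    intro q1 q2 l1 l2 h1 h2 lam ha hb
    have heq : q2 lam = fun _ => 1 := h2.1 lam hb
    have hlt : ∀ x, q1 lam x < 1 := h1.2 lam ha
    refine lt_of_le_of_ne (fun x => ?_) (fun hc => ?_)
    · rw [heq]; exact (hlt x).le
    · obtain ⟨x⟩ := ‹Nonempty X›
      have := hlt x
      rw [hc, heq] at this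
      exact lt_irrefl _ this
  have neq : ∀ (q1 q2 : ℝ → X → ℝ) (l1 l2 : ℝ), IsThreshold q1 l1 → IsThreshold q2 l2 →
      ∀ lam, q1 lam ≠ q2 lam → ¬ (lam < l1 ∧ lam < l2) := by
    rintro q1 q2 l1 l2 h1 h2 lam hne ⟨ha, hb⟩
    exact hne ((h1.1 lam ha).trans (h2.1 lam hb).symm)
  rcases lt_or_eq_of_le hlesN with hNlt | hNeq
  · right
    have h1 : lNA ≤ lMA := by
      by_contra h
      push_neg at h
      obtain ⟨lam, hl1, hl2⟩ := exists_between (lt_min hMAs h : lMA < min lMs lNA)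
      have hpos : 0 < lam := hMA.trans hl1
      have hlt := strict qMA qMC lMA lMs htMA htMs lam hl1 (hl2.trans_le (min_le_left _ _))
      have hNlt' := ((transfer lam hpos).2.1).mp hlt
      exact neq qNA qNC lNA lNs htNA htNs lam hNlt'.ne
        ⟨hl2.trans_le (min_le_right _ _), ((hl2.trans_le (min_le_right _ _)).trans hNlt)⟩
    have h2 : lMA ≤ lNA := by
      by_contra h
      push_neg at h
      obtain ⟨lam, hl1, hl2⟩ := exists_between (lt_min hNlt h : lNA < min lNs lMA)
      have hpos : 0 < lam := hNA.trans hl1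
      have hlt := strict qNA qNC lNA lNs htNA htNs lam hl1 (hl2.trans_le (min_le_left _ _))
      have hMlt := ((transfer lam hpos).2.1).mpr hlt
      exact neq qMA qMC lMA lMs htMA htMs lam hMlt.ne
        ⟨hl2.trans_le (min_le_right _ _), ((hl2.trans_le (min_le_right _ _)).trans hMAs)⟩
    have heq : lNA = lMA := le_antisymm h1 h2
    exact ⟨heq, heq ▸ hNlt⟩
  · left
    refine ⟨hNeq.symm, ?_⟩
    by_contra h
    push_neg at h
    obtain ⟨lam, hl1, hl2⟩ := exists_between (lt_min hMAs h : lMA < min lMs lNA)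
    have hpos : 0 < lam := hMA.trans hl1
    have hlt := strict qMA qMC lMA lMs htMA htMs lam hl1 (hl2.trans_le (min_le_left _ _))
    have hNlt' := ((transfer lam hpos).2.1).mp hlt
    have hltNA : lam < lNA := hl2.trans_le (min_le_right _ _)
    exact neq qNA qNC lNA lNs htNA htNs lam hNlt'.ne ⟨hltNA, hNeq ▸ hltNA⟩
end

section
/- Under the stated data, if λMw < λMs, then λNw ≤ λMw; if moreover λNw < λNs, then λNw = λMw. (Corollary 5.8: maximality of the global critical parameter within a finite-modification equivalence class — if one process has a pure global survival phase, no process in its class has a strictly larger global critical parameter, and any other process in the class with a pure global survival phase has the same global critical parameter.) -/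
/-- Sharp threshold: extinction is almost sure also at `λ₀` itself. -/
def IsSharpThreshold {X : Type*} (q : ℝ → X → ℝ) (lam₀ : ℝ) : Prop :=
  (∀ lam : ℝ, lam ≤ lam₀ → q lam = fun _ => 1) ∧
  (∀ lam : ℝ, lam₀ < lam → ∀ x, q lam x < 1)

/-- The process with global extinction vectors `qX` and local extinction
vectors `qC` has a nonstrong local survival phase. -/
def HasNonstrongLocalPhase {X : Type*} (qX qC : ℝ → X → ℝ) : Prop :=
  ∃ lam : ℝ, 0 < lam ∧ qX lam < qC lam ∧ ∀ x, qC lam x < 1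


lemma cor58_aux
    {X : Type*} [Nonempty X]
    (qAX qAC qBX qBC : ℝ → X → ℝ)
    (lAw lAs lBw lBs : ℝ)
    (hAw : 0 < lAw)
    (htAw : IsThreshold qAX lAw) (htBw : IsThreshold qBX lBw)
    (htAs : IsSharpThreshold qAC lAs)
    (htBs : IsSharpThreshold qBC lBs)
    (hB : lBw ≤ lBs)
    (transfer : ∀ lam : ℝ, 0 < lam → (qAX lam < qAC lam ↔ qBX lam < qBC lam))
    (h : lAw < lAs) : lBw ≤ lAw := by
  by_contra hc
  push_neg at hc
  set lam : ℝ := (lAw + min lAs lBw) / 2 with hlam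
  have hmin : lAw < min lAs lBw := lt_min h hc
  have h1 : lAw < lam := by simp only [hlam]; linarith
  have h2 : lam < min lAs lBw := by simp only [hlam]; linarith
  have hpos : 0 < lam := lt_trans hAw h1
  have hAC : qAC lam = fun _ => 1 := htAs.1 lam (le_of_lt (lt_of_lt_of_le h2 (min_le_left _ _)))
  have hAXlt : ∀ x, qAX lam x < 1 := htAw.2 lam h1
  have hlt : qAX lam < qAC lam := by
    rw [Pi.lt_def, hAC]
    exact ⟨fun x => le_of_lt (hAXlt x), ⟨Classical.arbitrary X, hAXlt _⟩⟩
  have hltB : qBX lam < qBC lam := (transfer lam hpos).mp hlt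
  have hlamBw : lam < lBw := lt_of_lt_of_le h2 (min_le_right _ _)
  have hBX : qBX lam = fun _ => 1 := htBw.1 lam hlamBw
  have hBC : qBC lam = fun _ => 1 := htBs.1 lam (le_of_lt (lt_of_lt_of_le hlamBw hB))
  rw [hBX, hBC] at hltB
  exact lt_irrefl _ hltB

theorem cor58
    {X : Type*} [Nonempty X]
    (qMX qMC qNX qNC : ℝ → X → ℝ)
    (lMw lMs lNw lNs : ℝ)
    (hMw : 0 < lMw) (hMs : 0 < lMs) (hNw : 0 < lNw) (hNs : 0 < lNs)
    (htMw : IsThreshold qMX lMw) (htNw : IsThreshold qNX lNw)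
    (htMs : IsSharpThreshold qMC lMs) (htNs : IsSharpThreshold qNC lNs)
    (hM : lMw ≤ lMs) (hN : lNw ≤ lNs)
    (transfer : ∀ lam : ℝ, 0 < lam →
      (qMX lam = qMC lam ↔ qNX lam = qNC lam) ∧
      (qMX lam < qMC lam ↔ qNX lam < qNC lam) ∧
      (qMC lam < qMX lam ↔ qNC lam < qNX lam)) :
    (lMw < lMs → lNw ≤ lMw ∧ (lNw < lNs → lNw = lMw)) := by
  intro h
  have h1 : lNw ≤ lMw := cor58_aux qMX qMC qNX qNC lMw lMs lNw lNs hMw htMw htNw htMs htNs hN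
    (fun lam hl => (transfer lam hl).2.1) h
  refine ⟨h1, fun h2 => le_antisymm h1 ?_⟩
  exact cor58_aux qNX qNC qMX qMC lNw lNs lMw lMs hNw htNw htMw htNs htMs hM
    (fun lam hl => ((transfer lam hl).2.1).symm) h2
end

section
/- Under the stated data, if max(λNs, λMw) < λ and λ ≤ λMs, then qNX λ < qNC λ in the pointwise order and qNC λ x < 1 for every x ∈ X; that is, the process N exhibits a nonstrong local survival phase at parameter λ. (Corollary 5.9.) -/
theorem cor59
    {X : Type*} [Nonempty X]
    (qMX qMC qNX qNC : ℝ → X → ℝ)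
    (lMw lMs lNw lNs : ℝ)
    (hMw : 0 < lMw) (hMs : 0 < lMs) (hNw : 0 < lNw) (hNs : 0 < lNs)
    (htMw : IsThreshold qMX lMw) (htNw : IsThreshold qNX lNw)
    (htMs : IsSharpThreshold qMC lMs) (htNs : IsSharpThreshold qNC lNs)
    (hM : lMw ≤ lMs) (hN : lNw ≤ lNs)
    (transfer : ∀ lam : ℝ, 0 < lam →
      (qMX lam = qMC lam ↔ qNX lam = qNC lam) ∧
      (qMX lam < qMC lam ↔ qNX lam < qNC lam) ∧
      (qMC lam < qMX lam ↔ qNC lam < qNX lam)) :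
    (∀ lam : ℝ, max lNs lMw < lam → lam ≤ lMs →
      qNX lam < qNC lam ∧ ∀ x, qNC lam x < 1) := by
  intro lam hmax hle
  have hNslam : lNs < lam := lt_of_le_of_lt (le_max_left _ _) hmax
  have hMwlam : lMw < lam := lt_of_le_of_lt (le_max_right _ _) hmax
  have hpos : (0:ℝ) < lam := lt_trans hNs hNslam
  have hMC1 : qMC lam = fun _ => 1 := htMs.1 lam hle
  have hMXlt : ∀ x, qMX lam x < 1 := htMw.2 lam hMwlam
  have hMlt : qMX lam < qMC lam := by
    rw [hMC1]
    constructor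
    · intro x; exact le_of_lt (hMXlt x)
    · intro h
      obtain ⟨x⟩ := ‹Nonempty X›
      exact absurd (h x) (not_le.mpr (hMXlt x))
  refine ⟨((transfer lam hpos).2.1).mp hMlt, htNs.2 lam hNslam⟩
end

section
/- Under the stated data, if λMw < λMs, then at least one of the following holds: (a) λNw = λMw and λNs ≥ λMs; (b) N has a nonstrong local survival phase, i.e. there exists λ > 0 with qNX λ < qNC λ in the pointwise order and qNC λ x < 1 for every x ∈ X. (Proposition 5.10, item (1).) -/
theorem prop510_item1
    {X : Type*} [Nonempty X]
    (qMX qMC qNX qNC : ℝ → X → ℝ)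
    (lMw lMs lNw lNs : ℝ)
    (hMw : 0 < lMw) (hMs : 0 < lMs) (hNw : 0 < lNw) (hNs : 0 < lNs)
    (htMw : IsThreshold qMX lMw) (htNw : IsThreshold qNX lNw)
    (htMs : IsSharpThreshold qMC lMs) (htNs : IsSharpThreshold qNC lNs)
    (hM : lMw ≤ lMs) (hN : lNw ≤ lNs)
    (transfer : ∀ lam : ℝ, 0 < lam →
      (qMX lam = qMC lam ↔ qNX lam = qNC lam) ∧
      (qMX lam < qMC lam ↔ qNX lam < qNC lam) ∧
      (qMC lam < qMX lam ↔ qNC lam < qNX lam)) :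
    (lMw < lMs →
      (lNw = lMw ∧ lMs ≤ lNs) ∨ HasNonstrongLocalPhase qNX qNC) := by
  intro hlt
  by_cases hns : HasNonstrongLocalPhase qNX qNC
  · exact Or.inr hns
  left
  -- Claim A: every lam in (lMw, lMs] satisfies lam ≤ lNs
  have claimA : ∀ lam : ℝ, lMw < lam → lam ≤ lMs → lam ≤ lNs := by
    intro lam h1 h2
    have hpos : 0 < lam := lt_trans hMw h1
    have hMXlt : ∀ x, qMX lam x < 1 := htMw.2 lam h1
    have hMC1 : qMC lam = fun _ => 1 := htMs.1 lam h2
    have hMlt : qMX lam < qMC lam := by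
      rw [Pi.lt_def]
      constructor
      · intro x; rw [hMC1]; exact (hMXlt x).le
      · obtain ⟨x⟩ := (inferInstance : Nonempty X)
        exact ⟨x, by rw [hMC1]; exact hMXlt x⟩
    have hNlt : qNX lam < qNC lam := ((transfer lam hpos).2.1).mp hMlt
    by_contra hcon
    push_neg at hcon
    exact hns ⟨lam, hpos, hNlt, htNs.2 lam hcon⟩
  have hsle : lMs ≤ lNs := claimA lMs hlt le_rfl
  -- Claim B: lNw ≤ lMw
  have hB : lNw ≤ lMw := by
    by_contra hcon
    push_neg at hcon
    set lam := min lMs ((lMw + lNw) / 2) with hlam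
    have h1 : lMw < lam := lt_min hlt (by linarith)
    have h2 : lam ≤ lMs := min_le_left _ _
    have hltNw : lam < lNw := lt_of_le_of_lt (min_le_right _ _) (by linarith)
    have hpos : 0 < lam := lt_trans hMw h1
    have hMXlt : ∀ x, qMX lam x < 1 := htMw.2 lam h1
    have hMC1 : qMC lam = fun _ => 1 := htMs.1 lam h2
    have hMlt : qMX lam < qMC lam := by
      rw [Pi.lt_def]
      constructor
      · intro x; rw [hMC1]; exact (hMXlt x).le
      · obtain ⟨x⟩ := (inferInstance : Nonempty X)
        exact ⟨x, by rw [hMC1]; exact hMXlt x⟩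
    have hNlt : qNX lam < qNC lam := ((transfer lam hpos).2.1).mp hMlt
    have hNX1 : qNX lam = fun _ => 1 := htNw.1 lam hltNw
    have hNC1 : qNC lam = fun _ => 1 := htNs.1 lam (claimA lam h1 h2)
    rw [hNX1, hNC1] at hNlt
    exact lt_irrefl _ hNlt
  -- Claim C: lMw ≤ lNw
  have hC : lMw ≤ lNw := by
    by_contra hcon
    push_neg at hcon
    set lam := (lNw + lMw) / 2 with hlam
    have h1 : lNw < lam := by rw [hlam]; linarith
    have h2 : lam < lMw := by rw [hlam]; linarith
    have hpos : 0 < lam := lt_trans hNw h1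
    have hMX1 : qMX lam = fun _ => 1 := htMw.1 lam h2
    have hMC1 : qMC lam = fun _ => 1 := htMs.1 lam (le_of_lt (lt_of_lt_of_le h2 hM))
    have heq : qNX lam = qNC lam := ((transfer lam hpos).1).mp (hMX1.trans hMC1.symm)
    have hNC1 : qNC lam = fun _ => 1 :=
      htNs.1 lam (le_of_lt (lt_of_lt_of_le (lt_of_lt_of_le h2 hM) hsle))
    have hNXlt : ∀ x, qNX lam x < 1 := htNw.2 lam h1
    obtain ⟨x⟩ := (inferInstance : Nonempty X)
    have := hNXlt x
    rw [heq, hNC1] at this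
    exact lt_irrefl _ this
  exact ⟨le_antisymm hB hC, hsle⟩
end

section
/- Under the stated data, it is impossible that simultaneously: λMw < λMs (M has a pure global survival phase), λNw = λNs (N has no pure global survival phase), and N has no nonstrong local survival phase. In other words, an irreducible GMBRW with a pure global survival phase and an irreducible GMBRW with neither a pure global survival phase nor a nonstrong local survival phase cannot satisfy the transfer property, hence cannot lie in the same finite-modification equivalence class. (Corollary 5.12, item (1).) -/
theorem cor512_item1
    {X : Type*} [Nonempty X]
    (qMX qMC qNX qNC : ℝ → X → ℝ)
    (lMw lMs lNw lNs : ℝ)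
    (hMw : 0 < lMw) (hMs : 0 < lMs) (hNw : 0 < lNw) (hNs : 0 < lNs)
    (htMw : IsThreshold qMX lMw) (htNw : IsThreshold qNX lNw)
    (htMs : IsSharpThreshold qMC lMs) (htNs : IsSharpThreshold qNC lNs)
    (hM : lMw ≤ lMs) (hN : lNw ≤ lNs)
    (transfer : ∀ lam : ℝ, 0 < lam →
      (qMX lam = qMC lam ↔ qNX lam = qNC lam) ∧
      (qMX lam < qMC lam ↔ qNX lam < qNC lam) ∧
      (qMC lam < qMX lam ↔ qNC lam < qNX lam)) :
    ¬ (lMw < lMs ∧ lNw = lNs ∧ ¬ HasNonstrongLocalPhase qNX qNC) := by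
  rintro ⟨h1, h2, h3⟩
  apply h3
  have key : ∀ lam, lMw < lam → lam < lMs → lam ≠ lNs →
      HasNonstrongLocalPhase qNX qNC := by
    intro lam hl hu hne
    have hpos : 0 < lam := hMw.trans hl
    have hC : qMC lam = fun _ => 1 := htMs.1 lam hu.le
    have hlt : qMX lam < qMC lam := by
      refine lt_of_le_of_ne ?_ ?_
      · intro x; rw [hC]; exact (htMw.2 lam hl x).le
      · intro h
        obtain ⟨x⟩ := ‹Nonempty X›
        have := htMw.2 lam hl x
        rw [h, hC] at this
        exact lt_irrefl 1 this
    have hNlt := ((transfer lam hpos).2.1).mp hlt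
    rcases lt_trichotomy lam lNs with hc | hc | hc
    · exfalso
      have e1 : qNX lam = fun _ => 1 := htNw.1 lam (by rw [h2]; exact hc)
      have e2 : qNC lam = fun _ => 1 := htNs.1 lam hc.le
      rw [e1, e2] at hNlt
      exact lt_irrefl _ hNlt
    · exact absurd hc hne
    · exact ⟨lam, hpos, hNlt, htNs.2 lam hc⟩
  by_cases h : (lMw + lMs) / 2 = lNs
  · exact key ((lMw + (lMw + lMs) / 2) / 2) (by linarith) (by linarith)
      (by rw [← h]; intro hh; linarith)
  · exact key ((lMw + lMs) / 2) (by linarith) (by linarith) h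
end
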